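/- If X is a CW complex and Y is a locally finite CW complex, then the product space X × Y with the product topology is compactly generated, and hence is a CW complex with the product cell structure. -/

import Mathlib

open Set Metric Topology

/-- Eventual domination of functions `ℕ → ℕ`. -/
def EvDom (f g : ℕ → ℕ) : Prop := ∀ᶠ n in Filter.atTop, f n ≤ g n

/-- The bounding number `𝔟`: the least cardinality of a family of functions `ℕ → ℕ`
unbounded with respect to eventual domination. -/
noncomputable def boundingNumber : Cardinal :=
  sInf {c : Cardinal | ∃ F : Set (ℕ → ℕ), Cardinal.mk F = c ∧
    ∀ g : ℕ → ℕ, ∃ f ∈ F, ¬ EvDom f g}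

/-- A cell decomposition of a Hausdorff space: characteristic maps from closed discs,
restricting to homeomorphisms onto their images on the open discs, with the open cells
partitioning the space, satisfying closure-finiteness. -/
structure CellStruct (X : Type) [TopologicalSpace X] where
  ι : Type
  dim : ι → ℕ
  map : (i : ι) → EuclideanSpace ℝ (Fin (dim i)) → X
  continuousOn : ∀ i, ContinuousOn (map i) (closedBall 0 1)
  isEmbedding : ∀ i, IsEmbedding ((ball (0 : EuclideanSpace ℝ (Fin (dim i))) 1).restrict (map i))
  pairwiseDisjoint :
    Pairwise fun i j => Disjoint (map i '' ball 0 1) (map j '' ball 0 1)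
  iUnion_eq : ⋃ i, map i '' ball 0 1 = univ
  closureFinite : ∀ i, ∃ F : Finset ι, (∀ j ∈ F, dim j < dim i) ∧
    map i '' sphere 0 1 ⊆ ⋃ j ∈ F, map j '' ball 0 1

namespace CellStruct

variable {X : Type} [TopologicalSpace X]

/-- The open cell with index `i`. -/
def openCell (C : CellStruct X) (i : C.ι) : Set X := C.map i '' ball 0 1

/-- The closed cell with index `i`. -/
def closedCell (C : CellStruct X) (i : C.ι) : Set X := C.map i '' closedBall 0 1

/-- The image of the boundary sphere of the cell with index `i`. -/
def sphereImage (C : CellStruct X) (i : C.ι) : Set X := C.map i '' sphere 0 1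

/-- The cell structure has the weak topology: a set is closed iff its intersection with
every closed cell is closed. -/
def HasWeakTopology (C : CellStruct X) : Prop :=
  ∀ A : Set X, IsClosed A ↔ ∀ i, IsClosed (A ∩ C.closedCell i)

end CellStruct

/-- A CW structure on a (Hausdorff) space: a cell decomposition with closure-finiteness,
such that the topology is the weak topology determined by the closed cells. -/
structure CWStruct (X : Type) [TopologicalSpace X] extends CellStruct X where
  weakTopology : toCellStruct.HasWeakTopology

namespace CWStruct

variable {X : Type} [TopologicalSpace X]

/-- A subcomplex: a union of open cells containing the closure of each of its cells. -/
def IsSubcomplex (C : CWStruct X) (A : Set X) : Prop :=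
  (∃ J : Set C.ι, A = ⋃ j ∈ J, C.openCell j) ∧
    ∀ i, C.openCell i ⊆ A → C.closedCell i ⊆ A

/-- The set of (indices of) cells of a subcomplex `A`. -/
def cells (C : CWStruct X) (A : Set X) : Set C.ι := {i | C.openCell i ⊆ A}

/-- `X` is locally less than `κ`: every point is in the interior of a subcomplex
with fewer than `κ` many cells. -/
def LocallyLT (C : CWStruct X) (κ : Cardinal) : Prop :=
  ∀ x : X, ∃ A : Set X, C.IsSubcomplex A ∧ Cardinal.mk (C.cells A) < κ ∧ x ∈ interior A

/-- Locally finite: every point is in the interior of a finite subcomplex. -/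
def LocallyFinite (C : CWStruct X) : Prop := C.LocallyLT Cardinal.aleph0

/-- Locally countable: every point is in the interior of a countable subcomplex. -/
def LocallyCountable (C : CWStruct X) : Prop := C.LocallyLT (Cardinal.aleph 1)

end CWStruct

/-- `E` is a CW structure on `X × Y` (with the product topology) whose cells are
exactly the products of cells of `C` and `D`, with the corresponding dimensions.
The existence of such an `E` expresses that the product topology on `X × Y`
makes it a CW complex with the product cell structure. -/
def IsProductCWStruct {X Y : Type} [TopologicalSpace X] [TopologicalSpace Y]
    (C : CWStruct X) (D : CWStruct Y) (E : CWStruct (X × Y)) : Prop :=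
  (∀ k : E.ι, ∃ (a : C.ι) (b : D.ι),
      E.openCell k = C.openCell a ×ˢ D.openCell b ∧ E.dim k = C.dim a + D.dim b) ∧
  (∀ (a : C.ι) (b : D.ι), ∃ k : E.ι, E.openCell k = C.openCell a ×ˢ D.openCell b)

/-- A space is compactly generated: a set is closed whenever its intersection with
every compact subset is closed in the subspace topology. -/
def IsKSpace (X : Type) [TopologicalSpace X] : Prop :=
  ∀ A : Set X, (∀ K : Set X, IsCompact K → IsClosed ((Subtype.val ⁻¹' A : Set K))) → IsClosed A

namespace CWStruct

variable {X : Type} [TopologicalSpace X]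

/-- The collar neighbourhood `C^e_n(U)` inside the closed cell `e`:
the image of `{t • z : t ∈ (n/(n+1), 1], z ∈ Sᵈ, φ_e z ∈ U}` under `φ_e`. -/
noncomputable def collar (C : CWStruct X) (e : C.ι) (n : ℕ) (U : Set X) : Set X :=
  C.map e '' {p | ∃ t ∈ Set.Ioc ((n : ℝ) / (n + 1)) 1,
    ∃ z : EuclideanSpace ℝ (Fin (C.dim e)), ‖z‖ = 1 ∧ C.map e z ∈ U ∧ p = t • z}

/-- The basic neighbourhood `B_n(x)` of `x = φ_{i₀} z` inside its open cell: the image of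
the open ball about `z` of radius `min (1/(n+1)) ((1 - ‖z‖)/2)`. -/
noncomputable def ballNbhd (C : CWStruct X) (i₀ : C.ι)
    (z : EuclideanSpace ℝ (Fin (C.dim i₀))) (n : ℕ) : Set X :=
  C.map i₀ '' Metric.ball z (min (1 / (n + 1)) ((1 - ‖z‖) / 2))

open Classical in
/-- The part of the neighbourhood `U_f(x)` lying in the `n`-skeleton, defined by recursion
on dimension: start with `B_{f i₀}(x)` in dimension `dim i₀` (with the empty set in every
other cell of dimension at most `dim i₀`), and extend through each cell of each higher
dimension by the collar neighbourhoods `C^e_{f e}(·)`. -/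
noncomputable def nbhdSkel (C : CWStruct X) (i₀ : C.ι)
    (z : EuclideanSpace ℝ (Fin (C.dim i₀))) (f : C.ι → ℕ) : ℕ → Set X
  | 0 => if C.dim i₀ = 0 then C.ballNbhd i₀ z (f i₀) else ∅
  | n + 1 =>
      (if C.dim i₀ = n + 1 then C.ballNbhd i₀ z (f i₀) else ∅) ∪
      C.nbhdSkel i₀ z f n ∪
      ⋃ e : C.ι, if C.dim e = n + 1 then C.collar e (f e) (C.nbhdSkel i₀ z f n) else ∅

/-- The open neighbourhood `U_f(x)` of `x = φ_{i₀} z` determined by `f : ι → ℕ`. -/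
noncomputable def nbhd (C : CWStruct X) (i₀ : C.ι)
    (z : EuclideanSpace ℝ (Fin (C.dim i₀))) (f : C.ι → ℕ) : Set X :=
  ⋃ n, C.nbhdSkel i₀ z f n

end CWStruct



variable {E₁ E₂ : Type*} [NormedAddCommGroup E₁] [NormedAddCommGroup E₂]
  [NormedSpace ℝ E₁] [NormedSpace ℝ E₂]

open Classical in
/-- Radial rescaling along a continuous linear equivalence. -/
noncomputable def radial (e : E₁ ≃L[ℝ] E₂) (x : E₁) : E₂ :=
  if x = 0 then 0 else (‖x‖ / ‖e x‖) • e x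

theorem norm_radial (e : E₁ ≃L[ℝ] E₂) (x : E₁) : ‖radial e x‖ = ‖x‖ := by
  unfold radial
  split_ifs with h
  · simp [h]
  · have hex : e x ≠ 0 := by simpa using h
    have : ‖e x‖ ≠ 0 := norm_ne_zero_iff.2 hex
    rw [norm_smul, Real.norm_eq_abs, abs_div, abs_norm, abs_norm, div_mul_cancel₀ _ this]

theorem radial_radial (e : E₁ ≃L[ℝ] E₂) (x : E₁) : radial e.symm (radial e x) = x := by
  rcases eq_or_ne x 0 with rfl | hx
  · simp [radial]
  · have hex : e x ≠ 0 := by simpa using hx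
    have hnex : ‖e x‖ ≠ 0 := norm_ne_zero_iff.2 hex
    have hnx : ‖x‖ ≠ 0 := norm_ne_zero_iff.2 hx
    have h1 : radial e x = (‖x‖ / ‖e x‖) • e x := if_neg hx
    have h2 : radial e x ≠ 0 := by
      intro h; apply hx; have := norm_radial e x; rw [h] at this; simpa using this.symm
    rw [radial, if_neg h2, norm_radial, h1, map_smul, e.symm_apply_apply, norm_smul,
      Real.norm_eq_abs, abs_div, abs_norm, abs_norm, smul_smul]
    rw [div_mul_eq_div_div]
    field_simp
    exact one_smul _ _

theorem continuous_radial (e : E₁ ≃L[ℝ] E₂) : Continuous (radial e) := by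
  rw [continuous_iff_continuousAt]
  intro x
  rcases eq_or_ne x 0 with rfl | hx
  · have h0 : radial e 0 = 0 := by simp [radial]
    rw [ContinuousAt, h0, tendsto_zero_iff_norm_tendsto_zero]
    simp only [norm_radial]
    simpa using (continuous_norm.tendsto (0 : E₁))
  · have hne : ‖e x‖ ≠ 0 := norm_ne_zero_iff.2 (by simpa using hx)
    have hcong : ∀ᶠ y in nhds x, radial e y = (‖y‖ / ‖e y‖) • e y := by
      filter_upwards [isOpen_compl_singleton.mem_nhds (show x ∈ ({0}ᶜ : Set E₁) by simpa using hx)]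
        with y hy
      exact if_neg (by simpa using hy)
    refine ContinuousAt.congr ?_ (hcong.mono fun y hy => hy.symm)
    exact ((continuous_norm.continuousAt.div
      ((e.continuous.norm).continuousAt) hne).smul e.continuous.continuousAt)

/-- Radial homeomorphism. -/
noncomputable def radialHomeo (e : E₁ ≃L[ℝ] E₂) : E₁ ≃ₜ E₂ where
  toFun := radial e
  invFun := radial e.symm
  left_inv := radial_radial e
  right_inv := by
    intro y
    have := radial_radial e.symm y
    simpa using this
  continuous_toFun := continuous_radial e
  continuous_invFun := continuous_radial e.symm

theorem norm_radialHomeo (e : E₁ ≃L[ℝ] E₂) (x : E₁) : ‖radialHomeo e x‖ = ‖x‖ :=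
  norm_radial e x

theorem radialHomeo_image_ball (e : E₁ ≃L[ℝ] E₂) (r : ℝ) :
    radialHomeo e '' ball 0 r = ball 0 r := by
  ext y
  constructor
  · rintro ⟨x, hx, rfl⟩
    simpa [mem_ball, dist_zero_right, norm_radialHomeo] using hx
  · intro hy
    refine ⟨(radialHomeo e).symm y, ?_, (radialHomeo e).apply_symm_apply y⟩
    have : ‖(radialHomeo e).symm y‖ = ‖y‖ := by
      conv_rhs => rw [← (radialHomeo e).apply_symm_apply y]
      rw [norm_radialHomeo]
    simpa [mem_ball, dist_zero_right, this] using hy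

theorem radialHomeo_image_closedBall (e : E₁ ≃L[ℝ] E₂) (r : ℝ) :
    radialHomeo e '' closedBall 0 r = closedBall 0 r := by
  ext y
  constructor
  · rintro ⟨x, hx, rfl⟩
    simpa [mem_closedBall, dist_zero_right, norm_radialHomeo] using hx
  · intro hy
    refine ⟨(radialHomeo e).symm y, ?_, (radialHomeo e).apply_symm_apply y⟩
    have : ‖(radialHomeo e).symm y‖ = ‖y‖ := by
      conv_rhs => rw [← (radialHomeo e).apply_symm_apply y]
      rw [norm_radialHomeo]
    simpa [mem_closedBall, dist_zero_right, this] using hy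

theorem radialHomeo_image_sphere (e : E₁ ≃L[ℝ] E₂) (r : ℝ) :
    radialHomeo e '' sphere 0 r = sphere 0 r := by
  ext y
  constructor
  · rintro ⟨x, hx, rfl⟩
    simpa [mem_sphere, dist_zero_right, norm_radialHomeo] using hx
  · intro hy
    refine ⟨(radialHomeo e).symm y, ?_, (radialHomeo e).apply_symm_apply y⟩
    have : ‖(radialHomeo e).symm y‖ = ‖y‖ := by
      conv_rhs => rw [← (radialHomeo e).apply_symm_apply y]
      rw [norm_radialHomeo]
    simpa [mem_sphere, dist_zero_right, this] using hy

/-- Linear splitting of Euclidean space. -/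
noncomputable def euclidSplitL (m n : ℕ) :
    EuclideanSpace ℝ (Fin (m + n)) ≃L[ℝ] EuclideanSpace ℝ (Fin m) × EuclideanSpace ℝ (Fin n) :=
  LinearEquiv.toContinuousLinearEquiv <|
    (WithLp.linearEquiv 2 ℝ (Fin (m + n) → ℝ)).trans <|
      ((LinearEquiv.piCongrLeft ℝ (fun _ : Fin (m + n) => ℝ) finSumFinEquiv).symm).trans <|
        (LinearEquiv.sumArrowLequivProdArrow (Fin m) (Fin n) ℝ ℝ).trans <|
          ((WithLp.linearEquiv 2 ℝ (Fin m → ℝ)).symm.prodCongr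
            ((WithLp.linearEquiv 2 ℝ (Fin n → ℝ)).symm))

/-- The homeomorphism splitting a Euclidean space as a product, preserving norms. -/
noncomputable def euclidSplit (m n : ℕ) :
    EuclideanSpace ℝ (Fin (m + n)) ≃ₜ EuclideanSpace ℝ (Fin m) × EuclideanSpace ℝ (Fin n) :=
  radialHomeo (euclidSplitL m n)

theorem euclidSplit_image_ball (m n : ℕ) :
    euclidSplit m n '' ball 0 1 = ball 0 1 ×ˢ ball 0 1 := by
  rw [ball_prod_same]; exact radialHomeo_image_ball _ 1

theorem euclidSplit_image_closedBall (m n : ℕ) :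
    euclidSplit m n '' closedBall 0 1 = closedBall 0 1 ×ˢ closedBall 0 1 := by
  rw [closedBall_prod_same]; exact radialHomeo_image_closedBall _ 1

theorem euclidSplit_image_sphere (m n : ℕ) :
    euclidSplit m n '' sphere 0 1 =
      sphere 0 1 ×ˢ closedBall 0 1 ∪ closedBall 0 1 ×ˢ sphere 0 1 := by
  have h := sphere_prod ((0 : EuclideanSpace ℝ (Fin m)), (0 : EuclideanSpace ℝ (Fin n))) 1
  have : (sphere 0 1 : Set (EuclideanSpace ℝ (Fin m) × EuclideanSpace ℝ (Fin n))) =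
      sphere 0 1 ×ˢ closedBall 0 1 ∪ closedBall 0 1 ×ˢ sphere 0 1 := h
  rw [← this]; exact radialHomeo_image_sphere _ 1
section CWLemmas

namespace CWStruct

variable {X : Type} [TopologicalSpace X]

theorem openCell_subset_closedCell (C : CWStruct X) (i : C.ι) :
    C.openCell i ⊆ C.closedCell i :=
  image_mono ball_subset_closedBall

theorem closedCell_eq (C : CWStruct X) (i : C.ι) :
    C.closedCell i = C.openCell i ∪ C.sphereImage i := by
  show C.map i '' closedBall 0 1 = C.map i '' ball 0 1 ∪ C.map i '' sphere 0 1
  rw [← image_union, ball_union_sphere]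

theorem isCompact_closedCell (C : CWStruct X) (i : C.ι) : IsCompact (C.closedCell i) :=
  (isCompact_closedBall _ _).image_of_continuousOn (C.continuousOn i)

theorem isClosed_closedCell [T2Space X] (C : CWStruct X) (i : C.ι) :
    IsClosed (C.closedCell i) :=
  (C.isCompact_closedCell i).isClosed

end CWStruct

/-- In a Hausdorff space, if the preimage of `A` in a compact `K` is closed, then
`A ∩ K` is closed. -/
theorem inter_compact_isClosed {Z : Type} [TopologicalSpace Z] [T2Space Z] {A K : Set Z}
    (hK : IsCompact K) (h : IsClosed ((Subtype.val ⁻¹' A : Set K))) : IsClosed (A ∩ K) := by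
  rw [inter_comm, ← Subtype.image_preimage_coe]
  exact hK.isClosed.isClosedEmbedding_subtypeVal.isClosedMap _ h

/-- A CW complex is a k-space. -/
theorem CWStruct.isKSpace {X : Type} [TopologicalSpace X] [T2Space X] (C : CWStruct X) :
    IsKSpace X := fun A h =>
  (C.weakTopology A).2 fun i =>
    inter_compact_isClosed (C.isCompact_closedCell i) (h _ (C.isCompact_closedCell i))

/-- A compact subset of a CW complex is contained in finitely many closed cells. -/
theorem CWStruct.compact_subset_finite {X : Type} [TopologicalSpace X] [T2Space X]
    (C : CWStruct X) {K : Set X} (hK : IsCompact K) :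
    ∃ S : Set C.ι, S.Finite ∧ K ⊆ ⋃ i ∈ S, C.closedCell i := by
  classical
  set I : Set C.ι := {i | (C.openCell i ∩ K).Nonempty} with hI
  have hch : ∀ j : I, ∃ x, x ∈ C.openCell j.1 ∩ K := fun j => j.2
  choose p hp using hch
  -- points of the range of p lie in pairwise distinct open cells
  have hpcell : ∀ j : I, p j ∈ C.openCell j.1 := fun j => (hp j).1
  have hpK : ∀ j : I, p j ∈ K := fun j => (hp j).2
  have hsep : ∀ (j j' : I) (i : C.ι), p j ∈ C.openCell i → j.1 = i := by
    intro j j' i hmem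
    by_contra hne
    exact Set.disjoint_left.1 (C.pairwiseDisjoint hne) (hpcell j) hmem
  have hpinj : Function.Injective p := by
    intro j j' hjj
    have h1 : j.1 = j'.1 := hsep j j' j'.1 (hjj ▸ hpcell j')
    exact Subtype.ext h1
  set S : Set X := Set.range p with hS
  -- every subset of S meets every closed cell in a finite set
  have key : ∀ d : ℕ, ∀ i : C.ι, C.dim i ≤ d → ∀ T : Set X, T ⊆ S →
      (T ∩ C.closedCell i).Finite := by
    intro d
    induction d using Nat.strong_induction_on with
    | _ d ih =>
      intro i hi T hT
      rw [C.closedCell_eq, Set.inter_union_distrib_left]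
      refine Set.Finite.union ?_ ?_
      · -- T ∩ openCell i is a subsingleton
        refine Set.Subsingleton.finite ?_
        intro x hx y hy
        obtain ⟨jx, rfl⟩ := hT hx.1
        obtain ⟨jy, rfl⟩ := hT hy.1
        have h1 : jx.1 = i := hsep jx jx i hx.2
        have h2 : jy.1 = i := hsep jy jy i hy.2
        have : jx = jy := Subtype.ext (h1.trans h2.symm)
        rw [this]
      · obtain ⟨F, hFdim, hFsub⟩ := C.closureFinite i
        have hsub : T ∩ C.sphereImage i ⊆ ⋃ j ∈ F, T ∩ C.closedCell j := by
          rintro x ⟨hxT, hxS⟩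
          obtain ⟨j, hjF, hxj⟩ := Set.mem_iUnion₂.1 (hFsub hxS)
          exact Set.mem_iUnion₂.2 ⟨j, hjF, hxT, C.openCell_subset_closedCell j hxj⟩
        refine Set.Finite.subset (Set.Finite.biUnion F.finite_toSet fun j hj => ?_) hsub
        have hlt : C.dim j < d := lt_of_lt_of_le (hFdim j hj) hi
        exact ih (C.dim j) hlt j le_rfl T hT
  have hclosed : ∀ T : Set X, T ⊆ S → IsClosed T := by
    intro T hT
    refine (C.weakTopology T).2 fun i => ?_
    exact (key (C.dim i) i le_rfl T hT).isClosed
  have hSsubK : S ⊆ K := by rintro x ⟨j, rfl⟩; exact hpK j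
  have hScomp : IsCompact S := hK.of_isClosed_subset (hclosed S subset_rfl) hSsubK
  have hSdisc : DiscreteTopology S := by
    rw [discreteTopology_iff_forall_isClosed]
    intro U
    have : U = Subtype.val ⁻¹' (Subtype.val '' U) := by
      rw [Subtype.val_injective.preimage_image]
    rw [this]
    refine IsClosed.preimage continuous_subtype_val ?_
    refine hclosed _ ?_
    rintro x ⟨⟨x', hx'⟩, _, rfl⟩
    exact hx'
  have hSfin : S.Finite := hScomp.finite ⟨hSdisc⟩
  have hIfin : I.Finite := by
    rw [← Set.finite_coe_iff]
    haveI : Finite S := hSfin.to_subtype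
    exact Finite.of_injective (fun j : I => (⟨p j, Set.mem_range_self j⟩ : S))
      fun j j' h => hpinj (congrArg Subtype.val h)
  refine ⟨I, hIfin, fun x hx => ?_⟩
  have : x ∈ ⋃ i, C.openCell i := by
    rw [show (⋃ i, C.openCell i) = univ from C.iUnion_eq]; exact Set.mem_univ x
  obtain ⟨i, hi⟩ := Set.mem_iUnion.1 this
  exact Set.mem_iUnion₂.2 ⟨i, ⟨x, hi, hx⟩, C.openCell_subset_closedCell i hi⟩

/-- A subcomplex is the union of the closed cells of its cells. -/
theorem CWStruct.subcomplex_eq_iUnion {X : Type} [TopologicalSpace X] (C : CWStruct X)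
    {A : Set X} (hA : C.IsSubcomplex A) : A = ⋃ i ∈ C.cells A, C.closedCell i := by
  obtain ⟨⟨J, rfl⟩, hcl⟩ := hA
  apply Set.Subset.antisymm
  · refine Set.iUnion₂_subset fun j hj => ?_
    have hjc : j ∈ C.cells (⋃ j ∈ J, C.openCell j) :=
      fun x hx => Set.mem_iUnion₂.2 ⟨j, hj, hx⟩
    exact fun x hx =>
      Set.mem_iUnion₂.2 ⟨j, hjc, C.openCell_subset_closedCell j hx⟩
  · exact Set.iUnion₂_subset fun i hi => hcl i hi

/-- Every point of a locally finite CW complex has a compact neighbourhood. -/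
theorem CWStruct.exists_compact_nhds {Y : Type} [TopologicalSpace Y] (D : CWStruct Y)
    (hD : D.LocallyFinite) (y : Y) : ∃ N : Set Y, IsCompact N ∧ N ∈ 𝓝 y := by
  obtain ⟨A, hsub, hcard, hy⟩ := hD y
  refine ⟨A, ?_, mem_interior_iff_mem_nhds.1 hy⟩
  rw [D.subcomplex_eq_iUnion hsub]
  have hfin : (D.cells A).Finite := by
    rw [← Set.finite_coe_iff]
    exact Cardinal.mk_lt_aleph0_iff.1 hcard
  exact hfin.isCompact_biUnion fun i _ => D.isCompact_closedCell i

end CWLemmas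
section KSpaceProd

/-- The product of a Hausdorff k-space with a Hausdorff space in which every point has a
compact neighbourhood is a k-space. -/
theorem isKSpace_prod {X Y : Type} [TopologicalSpace X] [TopologicalSpace Y]
    [T2Space X] [T2Space Y] (hX : IsKSpace X)
    (hY : ∀ y : Y, ∃ N : Set Y, IsCompact N ∧ N ∈ 𝓝 y) : IsKSpace (X × Y) := by
  haveI : WeaklyLocallyCompactSpace Y := ⟨hY⟩
  haveI : LocallyCompactSpace Y := WeaklyLocallyCompactSpace.locallyCompactSpace
  intro A h
  have hAK : ∀ K : Set (X × Y), IsCompact K → IsClosed (A ∩ K) := fun K hK =>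
    inter_compact_isClosed hK (h K hK)
  rw [← isOpen_compl_iff, isOpen_iff_mem_nhds]
  rintro ⟨x₀, y₀⟩ hxy
  obtain ⟨N, hNc, hNn⟩ := hY y₀
  have h1 : IsClosed (A ∩ ({x₀} ×ˢ N)) := hAK _ (isCompact_singleton.prod hNc)
  set Z : Set Y := Prod.mk x₀ ⁻¹' (A ∩ ({x₀} ×ˢ N)) with hZdef
  have hZc : IsClosed Z := h1.preimage (Continuous.prodMk_right x₀)
  have hy₀ : y₀ ∈ interior N \ Z := by
    refine ⟨mem_interior_iff_mem_nhds.2 hNn, fun hz => hxy hz.1⟩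
  obtain ⟨M, hMc, hMint, hMsub⟩ :=
    exists_compact_subset (isOpen_interior.sdiff hZc) hy₀
  have hMkey : ∀ y ∈ M, (x₀, y) ∉ A := by
    intro y hyM hyA
    have hyN : y ∈ N := interior_subset (hMsub hyM).1
    exact (hMsub hyM).2 ⟨hyA, rfl, hyN⟩
  set W : Set X := {x | ∀ y ∈ M, (x, y) ∉ A} with hWdef
  have hx₀W : x₀ ∈ W := hMkey
  have hWopen : IsOpen W := by
    rw [← isClosed_compl_iff]
    refine hX Wᶜ fun L hL => ?_
    have : (Subtype.val ⁻¹' Wᶜ : Set L) = (Subtype.val ⁻¹' W : Set L)ᶜ := rfl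
    rw [this, isClosed_compl_iff, isOpen_iff_mem_nhds]
    rintro ⟨x, hxL⟩ hxW
    have hU : IsOpen (A ∩ (L ×ˢ M))ᶜ := (hAK _ (hL.prod hMc)).isOpen_compl
    have hsub : {x} ×ˢ M ⊆ (A ∩ (L ×ˢ M))ᶜ := by
      rintro ⟨x', y⟩ ⟨hx', hy⟩ ⟨hA', -⟩
      rw [Set.mem_singleton_iff] at hx'
      subst hx'
      exact hxW y hy hA'
    obtain ⟨u, v, hu, hv, hxu, hMv, huv⟩ :=
      generalized_tube_lemma isCompact_singleton hMc hU hsub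
    refine Filter.mem_of_superset ((hu.preimage continuous_subtype_val).mem_nhds
      (by exact hxu rfl : (⟨x, hxL⟩ : L).1 ∈ u)) ?_
    rintro ⟨x', hx'L⟩ hx'u
    intro y hyM hyA
    have hmem : (x', y) ∈ u ×ˢ v := ⟨hx'u, hMv hyM⟩
    exact huv hmem ⟨hyA, hx'L, hyM⟩
  have : W ×ˢ interior M ⊆ Aᶜ := by
    rintro ⟨x, y⟩ ⟨hxW, hyM⟩ hA'
    exact hxW y (interior_subset hyM) hA'
  exact Filter.mem_of_superset ((hWopen.prod isOpen_interior).mem_nhds ⟨hx₀W, hMint⟩) this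

end KSpaceProd
section ProdCell

theorem prodMap_image {α β γ δ : Type*} (f : α → β) (g : γ → δ) (s : Set α) (t : Set γ) :
    Prod.map f g '' (s ×ˢ t) = (f '' s) ×ˢ (g '' t) := (Set.prod_image_image_eq).symm

variable {X Y : Type} [TopologicalSpace X] [TopologicalSpace Y]

/-- The characteristic map of a product cell. -/
noncomputable def pmap (C : CWStruct X) (D : CWStruct Y) (k : C.ι × D.ι) :
    EuclideanSpace ℝ (Fin (C.dim k.1 + D.dim k.2)) → X × Y :=
  Prod.map (C.map k.1) (D.map k.2) ∘ euclidSplit (C.dim k.1) (D.dim k.2)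

variable (C : CWStruct X) (D : CWStruct Y)

theorem pmap_image_ball (k : C.ι × D.ι) :
    pmap C D k '' ball 0 1 = C.openCell k.1 ×ˢ D.openCell k.2 := by
  unfold pmap
  rw [Set.image_comp, euclidSplit_image_ball, prodMap_image]
  rfl

theorem pmap_image_closedBall (k : C.ι × D.ι) :
    pmap C D k '' closedBall 0 1 = C.closedCell k.1 ×ˢ D.closedCell k.2 := by
  unfold pmap
  rw [Set.image_comp, euclidSplit_image_closedBall, prodMap_image]
  rfl

theorem pmap_image_sphere (k : C.ι × D.ι) :
    pmap C D k '' sphere 0 1 =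
      C.sphereImage k.1 ×ˢ D.closedCell k.2 ∪ C.closedCell k.1 ×ˢ D.sphereImage k.2 := by
  unfold pmap
  rw [Set.image_comp, euclidSplit_image_sphere, Set.image_union, prodMap_image, prodMap_image]
  rfl

theorem pmap_continuousOn (k : C.ι × D.ι) : ContinuousOn (pmap C D k) (closedBall 0 1) := by
  refine ContinuousOn.comp ((C.continuousOn k.1).prodMap (D.continuousOn k.2))
    (euclidSplit _ _).continuous.continuousOn ?_
  intro x hx
  rw [← euclidSplit_image_closedBall (C.dim k.1) (D.dim k.2)]
  exact Set.mem_image_of_mem _ hx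

theorem pmap_isCompact_image (k : C.ι × D.ι) : IsCompact (pmap C D k '' closedBall 0 1) :=
  (isCompact_closedBall _ _).image_of_continuousOn (pmap_continuousOn C D k)

theorem pmap_isEmbedding (k : C.ι × D.ι) :
    IsEmbedding ((ball (0 : EuclideanSpace ℝ (Fin (C.dim k.1 + D.dim k.2))) 1).restrict
      (pmap C D k)) := by
  have hmapsto : ∀ x ∈ ball (0 : EuclideanSpace ℝ (Fin (C.dim k.1 + D.dim k.2))) 1,
      euclidSplit (C.dim k.1) (D.dim k.2) x ∈
        (ball 0 1 : Set (EuclideanSpace ℝ (Fin (C.dim k.1)))) ×ˢ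
          (ball 0 1 : Set (EuclideanSpace ℝ (Fin (D.dim k.2)))) := by
    intro x hx
    rw [← euclidSplit_image_ball (C.dim k.1) (D.dim k.2)]
    exact Set.mem_image_of_mem _ hx
  have h1emb : IsEmbedding (fun x : (ball (0 : EuclideanSpace ℝ (Fin (C.dim k.1 + D.dim k.2))) 1) =>
      (⟨euclidSplit (C.dim k.1) (D.dim k.2) x.1, hmapsto x.1 x.2⟩ :
        ((ball 0 1 : Set (EuclideanSpace ℝ (Fin (C.dim k.1)))) ×ˢ
          (ball 0 1 : Set (EuclideanSpace ℝ (Fin (D.dim k.2))))))) := by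
    refine IsEmbedding.of_comp ?_ continuous_subtype_val ?_
    · exact Continuous.subtype_mk
        ((euclidSplit _ _).continuous.comp continuous_subtype_val) _
    · exact (euclidSplit _ _).isEmbedding.comp IsEmbedding.subtypeVal
  have hF2 : IsEmbedding (Prod.map
      ((ball 0 1 : Set (EuclideanSpace ℝ (Fin (C.dim k.1)))).restrict (C.map k.1))
      ((ball 0 1 : Set (EuclideanSpace ℝ (Fin (D.dim k.2)))).restrict (D.map k.2))) :=
    (C.isEmbedding k.1).prodMap (D.isEmbedding k.2)
  have heq : (ball 0 1).restrict (pmap C D k) =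
      (Prod.map
        ((ball 0 1 : Set (EuclideanSpace ℝ (Fin (C.dim k.1)))).restrict (C.map k.1))
        ((ball 0 1 : Set (EuclideanSpace ℝ (Fin (D.dim k.2)))).restrict (D.map k.2))) ∘
        (Homeomorph.Set.prod _ _) ∘
          (fun x : (ball (0 : EuclideanSpace ℝ (Fin (C.dim k.1 + D.dim k.2))) 1) =>
            (⟨euclidSplit (C.dim k.1) (D.dim k.2) x.1, hmapsto x.1 x.2⟩ :
              ((ball 0 1 : Set (EuclideanSpace ℝ (Fin (C.dim k.1)))) ×ˢ
                (ball 0 1 : Set (EuclideanSpace ℝ (Fin (D.dim k.2))))))) := by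
    funext x
    rfl
  rw [heq]
  exact hF2.comp ((Homeomorph.Set.prod _ _).isEmbedding.comp h1emb)

end ProdCell
section ProdCW

variable {X Y : Type} [TopologicalSpace X] [TopologicalSpace Y]

open Classical in
/-- The product CW structure on `X × Y`, given that `X × Y` is a k-space. -/
noncomputable def prodCW [T2Space X] [T2Space Y] (C : CWStruct X) (D : CWStruct Y)
    (hk : IsKSpace (X × Y)) : CWStruct (X × Y) where
  ι := C.ι × D.ι
  dim k := C.dim k.1 + D.dim k.2
  map k := pmap C D k
  continuousOn := pmap_continuousOn C D
  isEmbedding := pmap_isEmbedding C D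
  pairwiseDisjoint := by
    intro k k' hne
    show Disjoint (pmap C D k '' ball 0 1) (pmap C D k' '' ball 0 1)
    rw [pmap_image_ball, pmap_image_ball, Set.disjoint_left]
    rintro ⟨x, y⟩ ⟨hx, hy⟩ ⟨hx', hy'⟩
    by_cases h1 : k.1 = k'.1
    · have h2 : k.2 ≠ k'.2 := fun h2 => hne (Prod.ext h1 h2)
      exact Set.disjoint_left.1 (D.pairwiseDisjoint h2) hy hy'
    · exact Set.disjoint_left.1 (C.pairwiseDisjoint h1) hx hx'
  iUnion_eq := by
    rw [Set.eq_univ_iff_forall]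
    rintro ⟨x, y⟩
    have hx : x ∈ ⋃ i, C.openCell i := by
      rw [show (⋃ i, C.openCell i) = univ from C.iUnion_eq]; exact Set.mem_univ x
    have hy : y ∈ ⋃ j, D.openCell j := by
      rw [show (⋃ j, D.openCell j) = univ from D.iUnion_eq]; exact Set.mem_univ y
    obtain ⟨i, hi⟩ := Set.mem_iUnion.1 hx
    obtain ⟨j, hj⟩ := Set.mem_iUnion.1 hy
    refine Set.mem_iUnion.2 ⟨(i, j), ?_⟩
    show (x, y) ∈ pmap C D (i, j) '' ball 0 1
    rw [pmap_image_ball]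
    exact ⟨hi, hj⟩
  closureFinite := by
    intro k
    obtain ⟨Fa, hFa, hFas⟩ := C.closureFinite k.1
    obtain ⟨Fb, hFb, hFbs⟩ := D.closureFinite k.2
    refine ⟨((insert k.1 Fa) ×ˢ (insert k.2 Fb)).erase k, ?_, ?_⟩
    · intro j hj
      rw [Finset.mem_erase, Finset.mem_product] at hj
      obtain ⟨hne, hj1, hj2⟩ := hj
      show C.dim j.1 + D.dim j.2 < C.dim k.1 + D.dim k.2
      rcases Finset.mem_insert.1 hj1 with h1 | h1
      · rcases Finset.mem_insert.1 hj2 with h2 | h2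
        · exact absurd (Prod.ext h1 h2) hne
        · rw [h1]
          exact Nat.add_lt_add_left (hFb j.2 h2) _
      · rcases Finset.mem_insert.1 hj2 with h2 | h2
        · rw [h2]
          exact Nat.add_lt_add_right (hFa j.1 h1) _
        · exact Nat.add_lt_add (hFa j.1 h1) (hFb j.2 h2)
    · show pmap C D k '' sphere 0 1 ⊆ _
      rw [pmap_image_sphere]
      rintro ⟨x, y⟩ hxy
      have hcover : ∃ a b, a ∈ insert k.1 Fa ∧ b ∈ insert k.2 Fb ∧ (a, b) ≠ k ∧
          x ∈ C.openCell a ∧ y ∈ D.openCell b := by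
        rcases hxy with ⟨hx, hy⟩ | ⟨hx, hy⟩
        · obtain ⟨a, haF, hxa⟩ := Set.mem_iUnion₂.1 (hFas hx)
          have hane : a ≠ k.1 := fun h => absurd (h ▸ hFa a haF) (lt_irrefl _)
          rw [D.closedCell_eq] at hy
          rcases hy with hy | hy
          · exact ⟨a, k.2, Finset.mem_insert_of_mem haF, Finset.mem_insert_self _ _,
              fun h => hane (congrArg Prod.fst h), hxa, hy⟩
          · obtain ⟨b, hbF, hyb⟩ := Set.mem_iUnion₂.1 (hFbs hy)
            exact ⟨a, b, Finset.mem_insert_of_mem haF, Finset.mem_insert_of_mem hbF,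
              fun h => hane (congrArg Prod.fst h), hxa, hyb⟩
        · obtain ⟨b, hbF, hyb⟩ := Set.mem_iUnion₂.1 (hFbs hy)
          have hbne : b ≠ k.2 := fun h => absurd (h ▸ hFb b hbF) (lt_irrefl _)
          rw [C.closedCell_eq] at hx
          rcases hx with hx | hx
          · exact ⟨k.1, b, Finset.mem_insert_self _ _, Finset.mem_insert_of_mem hbF,
              fun h => hbne (congrArg Prod.snd h), hx, hyb⟩
          · obtain ⟨a, haF, hxa⟩ := Set.mem_iUnion₂.1 (hFas hx)
            exact ⟨a, b, Finset.mem_insert_of_mem haF, Finset.mem_insert_of_mem hbF,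
              fun h => hbne (congrArg Prod.snd h), hxa, hyb⟩
      obtain ⟨a, b, haF, hbF, hne, hxa, hyb⟩ := hcover
      refine Set.mem_iUnion₂.2 ⟨(a, b), ?_, ?_⟩
      · exact Finset.mem_erase.2 ⟨hne, Finset.mem_product.2 ⟨haF, hbF⟩⟩
      · show (x, y) ∈ pmap C D (a, b) '' ball 0 1
        rw [pmap_image_ball]
        exact ⟨hxa, hyb⟩
  weakTopology := by
    intro A
    constructor
    · intro hA k
      exact hA.inter (pmap_isCompact_image C D k).isClosed
    · intro hcells
      refine hk A fun K hK => ?_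
      obtain ⟨Sa, hSa, hLsub⟩ := C.compact_subset_finite (hK.image continuous_fst)
      obtain ⟨Sb, hSb, hMsub⟩ := D.compact_subset_finite (hK.image continuous_snd)
      have hBclosed : IsClosed (⋃ a ∈ Sa, ⋃ b ∈ Sb,
          A ∩ (C.closedCell a ×ˢ D.closedCell b)) := by
        refine hSa.isClosed_biUnion fun a _ => hSb.isClosed_biUnion fun b _ => ?_
        have h1 : IsClosed (A ∩ pmap C D (a, b) '' closedBall 0 1) := hcells (a, b)
        rw [pmap_image_closedBall] at h1
        exact h1
      have hKsub : ∀ p ∈ K, ∃ a ∈ Sa, ∃ b ∈ Sb,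
          p ∈ C.closedCell a ×ˢ D.closedCell b := by
        intro p hp
        obtain ⟨a, ha, hpa⟩ := Set.mem_iUnion₂.1 (hLsub (Set.mem_image_of_mem _ hp))
        obtain ⟨b, hb, hpb⟩ := Set.mem_iUnion₂.1 (hMsub (Set.mem_image_of_mem _ hp))
        exact ⟨a, ha, b, hb, hpa, hpb⟩
      have heq : (Subtype.val ⁻¹' A : Set K) =
          Subtype.val ⁻¹' (⋃ a ∈ Sa, ⋃ b ∈ Sb, A ∩ (C.closedCell a ×ˢ D.closedCell b)) := by
        ext ⟨p, hp⟩
        simp only [Set.mem_preimage, Set.mem_iUnion]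
        constructor
        · intro hA'
          obtain ⟨a, ha, b, hb, hpab⟩ := hKsub p hp
          exact ⟨a, ha, b, hb, hA', hpab⟩
        · rintro ⟨a, -, b, -, hA', -⟩
          exact hA'
      rw [heq]
      exact hBclosed.preimage continuous_subtype_val

theorem prodCW_openCell [T2Space X] [T2Space Y] (C : CWStruct X) (D : CWStruct Y)
    (hk : IsKSpace (X × Y)) (k : C.ι × D.ι) :
    (prodCW C D hk).openCell k = C.openCell k.1 ×ˢ D.openCell k.2 :=
  pmap_image_ball C D k

end ProdCW

/-- The product of a CW complex with a locally finite CW complex is compactly generated,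
and hence is a CW complex with the product cell structure. -/
theorem prod_cw_of_locallyFinite {X Y : Type} [TopologicalSpace X] [TopologicalSpace Y]
    [T2Space X] [T2Space Y] (C : CWStruct X) (D : CWStruct Y) (hD : D.LocallyFinite) :
    IsKSpace (X × Y) ∧ ∃ E : CWStruct (X × Y), IsProductCWStruct C D E := by
  have hk : IsKSpace (X × Y) := isKSpace_prod C.isKSpace (D.exists_compact_nhds hD)
  refine ⟨hk, prodCW C D hk, ?_, ?_⟩
  · intro k
    exact ⟨k.1, k.2, prodCW_openCell C D hk k, rfl⟩
  · intro a b
    exact ⟨(a, b), prodCW_openCell C D hk (a, b)⟩
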